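/- Let Ω ⊆ ℝ^n be a bounded open set with closure K and frontier ∂Ω, let a_1,…,a_r : K → ℝ be nonnegative continuous functions and w : K → ℝ^r continuous. Suppose ξ, ξ′ : [0,∞) × K → ℝ^r are continuous on [0,∞) × K and C² on (0,∞) × Ω (jointly in (t,x)), both satisfy the heat equation ∂_t ζ(t,x) − Δ_x ζ(t,x) + Σ_{j=1}^r a_j(x) e^{⟨v_j,ζ(t,x)⟩} v_j − w(x) = 0 on (0,∞) × Ω, and suppose ξ(0,·) = ξ′(0,·) on K and ξ(t,·) = ξ′(t,·) on ∂Ω for every t ≥ 0. Then ξ = ξ′ on [0,∞) × K. (Uniqueness of the solution of the heat equation with Dirichlet boundary condition, the first step of the proof of Theorem 1.1, in the Euclidean-domain setting.) -/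

import Mathlib

open scoped RealInnerProductSpace
open Filter Set

/-- The standard basis `u_1, …, u_r` of `ℝ^r`. -/
noncomputable def stdU {r : ℕ} (j : Fin r) : EuclideanSpace ℝ (Fin r) :=
  EuclideanSpace.single j 1

/-- The vectors `v_j = u_{j+1} - u_j` (`j = 1, …, r-1`), `v_r = u_1 - u_r`. -/
noncomputable def stdV {r : ℕ} (j : Fin r) : EuclideanSpace ℝ (Fin r) :=
  stdU (⟨(j.val + 1) % r, Nat.mod_lt _ j.pos⟩ : Fin r) - stdU j

/-- The Euclidean Laplacian `Δf = Σ_i ∂²f/∂x_i²` (componentwise for vector-valued `f`). -/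
noncomputable def lap {n : ℕ} {F : Type*} [NormedAddCommGroup F] [NormedSpace ℝ F]
    (f : EuclideanSpace ℝ (Fin n) → F) (x : EuclideanSpace ℝ (Fin n)) : F :=
  ∑ i : Fin n, iteratedFDeriv ℝ 2 f x (fun _ => EuclideanSpace.single i 1)

/-- One-sided first-derivative test at a left-max. -/
lemma deriv_nonneg_of_left_max {f : ℝ → ℝ} {c t₀ : ℝ} (hf : HasDerivAt f c t₀)
    (h : ∀ᶠ t in nhdsWithin t₀ (Iio t₀), f t ≤ f t₀) : 0 ≤ c := by
  have hs : Tendsto (slope f t₀) (nhdsWithin t₀ {t₀}ᶜ) (nhds c) :=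
    hasDerivAt_iff_tendsto_slope.1 hf
  have hmono : nhdsWithin t₀ (Iio t₀) ≤ nhdsWithin t₀ {t₀}ᶜ :=
    nhdsWithin_mono _ (fun y hy => ne_of_lt hy)
  have hs' : Tendsto (slope f t₀) (nhdsWithin t₀ (Iio t₀)) (nhds c) := hs.mono_left hmono
  refine ge_of_tendsto hs' ?_
  filter_upwards [h, self_mem_nhdsWithin] with t ht ht'
  have h1 : f t - f t₀ ≤ 0 := by linarith
  have h2 : t - t₀ < 0 := by simpa [sub_neg] using ht'
  have key : 0 ≤ (f t - f t₀) / (t - t₀) := div_nonneg_of_nonpos h1 h2.le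
  simpa [slope_def_field, div_eq_div_iff] using key

/-- Second-derivative test at a local max, in "HasDerivAt data" form. -/
lemma second_deriv_nonpos_of_localMax {g dg : ℝ → ℝ} {c : ℝ}
    (h1 : ∀ᶠ s in nhds (0:ℝ), HasDerivAt g (dg s) s)
    (h2 : HasDerivAt dg c 0) (hmax : IsLocalMax g 0) : c ≤ 0 := by
  by_contra hc
  push_neg at hc
  have hg0 : dg 0 = 0 := by
    have hd : deriv g 0 = dg 0 := (h1.self_of_nhds).deriv
    rw [← hd]; exact hmax.deriv_eq_zero
  have hslope : Tendsto (slope dg 0) (nhdsWithin 0 {(0:ℝ)}ᶜ) (nhds c) :=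
    hasDerivAt_iff_tendsto_slope.1 h2
  have hev : ∀ᶠ s in nhdsWithin 0 {(0:ℝ)}ᶜ, 0 < slope dg 0 s :=
    hslope.eventually (eventually_gt_nhds hc)
  have hev' : ∀ᶠ s in nhdsWithin (0:ℝ) (Ioi 0), 0 < dg s := by
    have h := hev.filter_mono (nhdsWithin_mono _ (fun y hy => ne_of_gt hy))
    filter_upwards [h, self_mem_nhdsWithin] with s hs hs'
    have h0 : (0:ℝ) < s := hs'
    have : 0 < dg s / s := by simpa [slope_def_field, hg0] using hs
    rcases div_pos_iff.1 this with ⟨h', _⟩ | ⟨_, h''⟩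
    · exact h'
    · exact absurd h0 (not_lt.2 h''.le)
  rw [eventually_nhdsWithin_iff] at hev'
  obtain ⟨δ₁, hδ₁, hball₁⟩ := Metric.eventually_nhds_iff_ball.1 hev'
  obtain ⟨δ₂, hδ₂, hball₂⟩ := Metric.eventually_nhds_iff_ball.1 h1
  obtain ⟨δ₃, hδ₃, hball₃⟩ := Metric.eventually_nhds_iff_ball.1 hmax
  set δ := min δ₁ (min δ₂ δ₃) with hδdef
  have hδ : 0 < δ := lt_min hδ₁ (lt_min hδ₂ hδ₃)
  have hmem : ∀ s ∈ Icc (0:ℝ) (δ/2), ∀ δ' : ℝ, δ ≤ δ' → s ∈ Metric.ball (0:ℝ) δ' := by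
    intro s hs δ' hδ'
    rw [Metric.mem_ball, Real.dist_eq, sub_zero, abs_of_nonneg hs.1]
    linarith [hs.2]
  have hd2 : δ ≤ δ₂ := (min_le_right _ _).trans (min_le_left _ _)
  have hd3 : δ ≤ δ₃ := (min_le_right _ _).trans (min_le_right _ _)
  have hd1 : δ ≤ δ₁ := min_le_left _ _
  have hcont : ContinuousOn g (Icc 0 (δ/2)) := fun s hs =>
    ((hball₂ s (hmem s hs δ₂ hd2)).differentiableAt.continuousAt).continuousWithinAt
  have hmono : StrictMonoOn g (Icc 0 (δ/2)) := by
    refine strictMonoOn_of_deriv_pos (convex_Icc 0 (δ/2)) hcont ?_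
    intro s hs
    rw [interior_Icc] at hs
    have hsIcc : s ∈ Icc (0:ℝ) (δ/2) := ⟨hs.1.le, hs.2.le⟩
    rw [(hball₂ s (hmem s hsIcc δ₂ hd2)).deriv]
    exact hball₁ s (hmem s hsIcc δ₁ hd1) hs.1
  have hlt : g 0 < g (δ/2) :=
    hmono (left_mem_Icc.2 (by linarith)) (right_mem_Icc.2 (by linarith)) (by linarith)
  have hle : g (δ/2) ≤ g 0 := hball₃ _ (hmem _ (right_mem_Icc.2 (by linarith)) δ₃ hd3)
  linarith

/-- Second directional derivative along a line, for a `C²` function. -/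
lemma line_hasDerivAt_data {E F : Type*} [NormedAddCommGroup E] [NormedSpace ℝ E]
    [NormedAddCommGroup F] [NormedSpace ℝ F] (f : E → F) (x v : E)
    (hf : ContDiffAt ℝ 2 f x) :
    ∃ dg : ℝ → F, (∀ᶠ s in nhds (0:ℝ), HasDerivAt (fun u : ℝ => f (x + u • v)) (dg s) s) ∧
      HasDerivAt dg (iteratedFDeriv ℝ 2 f x (fun _ => v)) 0 := by
  obtain ⟨u, hu, hcd⟩ := hf.contDiffOn (le_refl 2) (by simp)
  set s : Set E := interior u with hs
  have hso : IsOpen s := isOpen_interior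
  have hxs : x ∈ s := mem_interior_iff_mem_nhds.2 hu
  have hcd' : ContDiffOn ℝ 2 f s := hcd.mono interior_subset
  set L : ℝ → E := fun t => x + t • v with hL
  have hLc : Continuous L := by fun_prop
  have hL0 : L 0 = x := by simp [hL]
  have hLd : ∀ t : ℝ, HasDerivAt L v t := by
    intro t
    simpa [hL] using ((hasDerivAt_id t).smul_const v).const_add x
  set dg : ℝ → F := fun t => fderiv ℝ f (L t) v with hdg
  refine ⟨dg, ?_, ?_⟩
  · have hnb : L ⁻¹' s ∈ nhds (0:ℝ) := by
      refine (hso.preimage hLc).mem_nhds ?_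
      simpa [hL0] using hxs
    filter_upwards [hnb] with t ht
    have hdiff : DifferentiableAt ℝ f (L t) :=
      ((hcd'.contDiffAt (hso.mem_nhds ht)).differentiableAt (by norm_num))
    exact hdiff.hasFDerivAt.comp_hasDerivAt t (hLd t)
  · have hfd : ContDiffAt ℝ 1 (fderiv ℝ f) x := hf.fderiv_right (by norm_num)
    have hdiff2 : DifferentiableAt ℝ (fderiv ℝ f) x := hfd.differentiableAt (by norm_num)
    have hcomp : HasDerivAt (fun t => fderiv ℝ f (L t)) (fderiv ℝ (fderiv ℝ f) x v) 0 := by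
      have h0 : HasFDerivAt (fderiv ℝ f) (fderiv ℝ (fderiv ℝ f) x) (L 0) := by
        rw [hL0]; exact hdiff2.hasFDerivAt
      exact h0.comp_hasDerivAt 0 (hLd 0)
    have happ := (ContinuousLinearMap.apply ℝ F v).hasFDerivAt.comp_hasDerivAt 0 hcomp
    have hit : iteratedFDeriv ℝ 2 f x (fun _ => v) = fderiv ℝ (fderiv ℝ f) x v v := by
      rw [iteratedFDeriv_two_apply]
    rw [hit]
    exact happ

lemma exp_monotone_aux (b b' : ℝ) : 0 ≤ (Real.exp b - Real.exp b') * (b - b') := by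
  rcases le_total b' b with h | h
  · exact mul_nonneg (by simpa [sub_nonneg] using Real.exp_le_exp.2 h) (by linarith)
  · have h1 : Real.exp b - Real.exp b' ≤ 0 := by
      simpa [sub_nonpos] using Real.exp_le_exp.2 h
    nlinarith

/-- Uniqueness of the solution of the heat equation with Dirichlet boundary condition
(first step of the proof of Theorem 1.1, Euclidean-domain setting). -/
theorem heat_flow_uniqueness (n r : ℕ) (hr : 2 ≤ r)
    (Ω : Set (EuclideanSpace ℝ (Fin n))) (hΩo : IsOpen Ω) (hΩb : Bornology.IsBounded Ω)
    (a : Fin r → EuclideanSpace ℝ (Fin n) → ℝ)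
    (ha_cont : ∀ j, ContinuousOn (a j) (closure Ω))
    (ha_nonneg : ∀ j, ∀ x ∈ closure Ω, 0 ≤ a j x)
    (w : EuclideanSpace ℝ (Fin n) → EuclideanSpace ℝ (Fin r))
    (hw : ContinuousOn w (closure Ω))
    (ξ ξ' : ℝ → EuclideanSpace ℝ (Fin n) → EuclideanSpace ℝ (Fin r))
    (hξc : ContinuousOn (fun p : ℝ × EuclideanSpace ℝ (Fin n) => ξ p.1 p.2)
      (Set.Ici 0 ×ˢ closure Ω))
    (hξ'c : ContinuousOn (fun p : ℝ × EuclideanSpace ℝ (Fin n) => ξ' p.1 p.2)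
      (Set.Ici 0 ×ˢ closure Ω))
    (hξ : ContDiffOn ℝ 2 (fun p : ℝ × EuclideanSpace ℝ (Fin n) => ξ p.1 p.2)
      (Set.Ioi 0 ×ˢ Ω))
    (hξ' : ContDiffOn ℝ 2 (fun p : ℝ × EuclideanSpace ℝ (Fin n) => ξ' p.1 p.2)
      (Set.Ioi 0 ×ˢ Ω))
    (heq : ∀ t ∈ Set.Ioi (0 : ℝ), ∀ x ∈ Ω,
      deriv (fun s => ξ s x) t - lap (ξ t) x
        + ∑ j : Fin r, (a j x * Real.exp ⟪stdV j, ξ t x⟫) • stdV j - w x = 0)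
    (heq' : ∀ t ∈ Set.Ioi (0 : ℝ), ∀ x ∈ Ω,
      deriv (fun s => ξ' s x) t - lap (ξ' t) x
        + ∑ j : Fin r, (a j x * Real.exp ⟪stdV j, ξ' t x⟫) • stdV j - w x = 0)
    (hinit : ∀ x ∈ closure Ω, ξ 0 x = ξ' 0 x)
    (hbd : ∀ t : ℝ, 0 ≤ t → ∀ x ∈ frontier Ω, ξ t x = ξ' t x) :
    ∀ t : ℝ, 0 ≤ t → ∀ x ∈ closure Ω, ξ t x = ξ' t x := by
  classical
  set K := closure Ω with hKdef
  have hKc : IsCompact K := hΩb.isCompact_closure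
  set Z : ℝ × EuclideanSpace ℝ (Fin n) → EuclideanSpace ℝ (Fin r) :=
    fun p => ξ p.1 p.2 - ξ' p.1 p.2 with hZdef
  have hZcont : ContinuousOn Z (Set.Ici 0 ×ˢ K) := hξc.sub hξ'c
  set φ : ℝ × EuclideanSpace ℝ (Fin n) → ℝ := fun p => ⟪Z p, Z p⟫ with hφdef
  have hφcont : ContinuousOn φ (Set.Ici 0 ×ˢ K) := hZcont.inner hZcont
  have hφnonneg : ∀ p, 0 ≤ φ p := fun p => real_inner_self_nonneg
  have hfr : frontier Ω = K \ Ω := hΩo.frontier_eq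
  -- key claim
  have key : ∀ ε > 0, ∀ T > 0, ∀ p ∈ Set.Icc (0:ℝ) T ×ˢ K, φ p ≤ ε * T := by
    intro ε hε T hT p hp
    have hsub : Set.Icc (0:ℝ) T ×ˢ K ⊆ Set.Ici 0 ×ˢ K :=
      Set.prod_mono Set.Icc_subset_Ici_self subset_rfl
    have hS : IsCompact (Set.Icc (0:ℝ) T ×ˢ K) := isCompact_Icc.prod hKc
    set ψ : ℝ × EuclideanSpace ℝ (Fin n) → ℝ := fun q => φ q - ε * q.1 with hψdef
    have hψcont : ContinuousOn ψ (Set.Icc (0:ℝ) T ×ˢ K) :=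
      (hφcont.mono hsub).sub ((continuous_const.mul continuous_fst).continuousOn)
    obtain ⟨p₀, hp₀S, hmax⟩ := hS.exists_isMaxOn ⟨p, hp⟩ hψcont
    obtain ⟨t₀, x₀⟩ := p₀
    obtain ⟨ht₀, hx₀⟩ := hp₀S
    simp only [Set.mem_Icc] at ht₀
    have hmax' : ∀ q ∈ Set.Icc (0:ℝ) T ×ˢ K, ψ q ≤ ψ (t₀, x₀) := fun q hq => hmax hq
    by_cases hcase : t₀ = 0 ∨ x₀ ∈ frontier Ω
    · -- parabolic boundary: max of ψ is ≤ 0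
      have hψ0 : ψ (t₀, x₀) ≤ 0 := by
        have hZ0 : Z (t₀, x₀) = 0 := by
          rcases hcase with h0 | hfb
          · subst h0
            exact sub_eq_zero.2 (hinit x₀ hx₀)
          · exact sub_eq_zero.2 (hbd t₀ ht₀.1 x₀ hfb)
        have hφz : φ (t₀, x₀) = 0 := by
          show (⟪Z (t₀, x₀), Z (t₀, x₀)⟫ : ℝ) = 0
          rw [hZ0, inner_zero_left]
        show φ (t₀, x₀) - ε * t₀ ≤ 0
        rw [hφz]
        have : 0 ≤ ε * t₀ := mul_nonneg hε.le ht₀.1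
        linarith
      have hψp : ψ p ≤ 0 := le_trans (hmax' p hp) hψ0
      have hp1 : p.1 ≤ T := (hp.1).2
      have : φ p ≤ ε * p.1 := by simpa [hψdef, sub_nonpos] using hψp
      calc φ p ≤ ε * p.1 := this
        _ ≤ ε * T := by nlinarith
    · -- interior max: contradiction
      exfalso
      push_neg at hcase
      obtain ⟨ht0ne, hxf⟩ := hcase
      have ht₀pos : 0 < t₀ := lt_of_le_of_ne ht₀.1 (Ne.symm ht0ne)
      have hx₀Ω : x₀ ∈ Ω := by
        by_contra hxo
        exact hxf (by rw [hfr]; exact ⟨hx₀, hxo⟩)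
      have hUo : IsOpen (Set.Ioi (0:ℝ) ×ˢ Ω) := isOpen_Ioi.prod hΩo
      have hp₀U : ((t₀, x₀) : ℝ × EuclideanSpace ℝ (Fin n)) ∈ Set.Ioi (0:ℝ) ×ˢ Ω :=
        ⟨ht₀pos, hx₀Ω⟩
      have hξat : ContDiffAt ℝ 2 (fun p : ℝ × EuclideanSpace ℝ (Fin n) => ξ p.1 p.2) (t₀, x₀) :=
        hξ.contDiffAt (hUo.mem_nhds hp₀U)
      have hξ'at : ContDiffAt ℝ 2 (fun p : ℝ × EuclideanSpace ℝ (Fin n) => ξ' p.1 p.2) (t₀, x₀) :=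
        hξ'.contDiffAt (hUo.mem_nhds hp₀U)
      -- time slices
      have hslt : ContDiffAt ℝ 2 (fun s : ℝ => ξ s x₀) t₀ :=
        hξat.comp t₀ ((contDiffAt_id.prodMk contDiffAt_const))
      have hslt' : ContDiffAt ℝ 2 (fun s : ℝ => ξ' s x₀) t₀ :=
        hξ'at.comp t₀ ((contDiffAt_id.prodMk contDiffAt_const))
      have hηd : HasDerivAt (fun s => ξ s x₀) (deriv (fun s => ξ s x₀) t₀) t₀ :=
        (hslt.differentiableAt (by norm_num)).hasDerivAt
      have hη'd : HasDerivAt (fun s => ξ' s x₀) (deriv (fun s => ξ' s x₀) t₀) t₀ :=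
        (hslt'.differentiableAt (by norm_num)).hasDerivAt
      set dη := deriv (fun s => ξ s x₀) t₀ with hdη
      set dη' := deriv (fun s => ξ' s x₀) t₀ with hdη'
      set ζ₀ : EuclideanSpace ℝ (Fin r) := ξ t₀ x₀ - ξ' t₀ x₀ with hζ₀
      -- time derivative of φ along t ↦ (t, x₀)
      have hZd : HasDerivAt (fun s => ξ s x₀ - ξ' s x₀) (dη - dη') t₀ := hηd.sub hη'd
      have hφd : HasDerivAt (fun t => φ (t, x₀)) (⟪ζ₀, dη - dη'⟫ + ⟪dη - dη', ζ₀⟫) t₀ :=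
        hZd.inner ℝ hZd
      have hεd : HasDerivAt (fun t : ℝ => ε * t) ε t₀ := by
        simpa using (hasDerivAt_id t₀).const_mul ε
      have hψd : HasDerivAt (fun t => ψ (t, x₀)) ((⟪ζ₀, dη - dη'⟫ + ⟪dη - dη', ζ₀⟫) - ε) t₀ :=
        hφd.sub hεd
      have htime : 0 ≤ (⟪ζ₀, dη - dη'⟫ + ⟪dη - dη', ζ₀⟫) - ε := by
        refine deriv_nonneg_of_left_max hψd ?_
        have hIoo : Set.Ioo 0 t₀ ∈ nhdsWithin t₀ (Set.Iio t₀) :=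
          Ioo_mem_nhdsLT_of_mem ⟨ht₀pos, le_refl t₀⟩
        filter_upwards [hIoo] with t ht
        exact hmax' (t, x₀) ⟨⟨ht.1.le, ht.2.le.trans ht₀.2⟩, subset_closure hx₀Ω⟩
      have htime2 : ε ≤ 2 * ⟪ζ₀, dη - dη'⟫ := by
        have := real_inner_comm (dη - dη') ζ₀
        linarith
      -- space part
      have hspace : ∀ i : Fin n,
          ⟪ζ₀, iteratedFDeriv ℝ 2 (ξ t₀) x₀ (fun _ => EuclideanSpace.single i 1)
            - iteratedFDeriv ℝ 2 (ξ' t₀) x₀ (fun _ => EuclideanSpace.single i 1)⟫ ≤ 0 := by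
        intro i
        set e : EuclideanSpace ℝ (Fin n) := EuclideanSpace.single i 1 with he
        have hslx : ContDiffAt ℝ 2 (ξ t₀) x₀ :=
          hξat.comp x₀ ((contDiffAt_const.prodMk contDiffAt_id))
        have hslx' : ContDiffAt ℝ 2 (ξ' t₀) x₀ :=
          hξ'at.comp x₀ ((contDiffAt_const.prodMk contDiffAt_id))
        obtain ⟨du, hu1, hu2⟩ := line_hasDerivAt_data (ξ t₀) x₀ e hslx
        obtain ⟨du', hu1', hu2'⟩ := line_hasDerivAt_data (ξ' t₀) x₀ e hslx'
        set zi : ℝ → EuclideanSpace ℝ (Fin r) :=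
          fun s => ξ t₀ (x₀ + s • e) - ξ' t₀ (x₀ + s • e) with hzi
        have hz1 : ∀ᶠ s in nhds (0:ℝ), HasDerivAt zi (du s - du' s) s := by
          filter_upwards [hu1, hu1'] with s hs hs'
          exact hs.sub hs'
        have hz0 : HasDerivAt zi (du 0 - du' 0) 0 := hz1.self_of_nhds
        set g : ℝ → ℝ := fun s => ⟪zi s, zi s⟫ with hg
        set dg : ℝ → ℝ := fun s => ⟪zi s, du s - du' s⟫ + ⟪du s - du' s, zi s⟫ with hdg
        have hg1 : ∀ᶠ s in nhds (0:ℝ), HasDerivAt g (dg s) s := by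
          filter_upwards [hz1] with s hs
          exact hs.inner ℝ hs
        set DD : EuclideanSpace ℝ (Fin r) :=
          iteratedFDeriv ℝ 2 (ξ t₀) x₀ (fun _ => e)
            - iteratedFDeriv ℝ 2 (ξ' t₀) x₀ (fun _ => e) with hDD
        have hg2 : HasDerivAt dg
            ((⟪zi 0, DD⟫ + ⟪du 0 - du' 0, du 0 - du' 0⟫)
              + (⟪du 0 - du' 0, du 0 - du' 0⟫ + ⟪DD, zi 0⟫)) 0 :=
          (hz0.inner ℝ (hu2.sub hu2')).add ((hu2.sub hu2').inner ℝ hz0)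
        have hlocmax : IsLocalMax g 0 := by
          have hcont : Continuous (fun s : ℝ => x₀ + s • e) := by fun_prop
          have hmemΩ : ∀ᶠ s in nhds (0:ℝ), x₀ + s • e ∈ Ω := by
            have : (fun s : ℝ => x₀ + s • e) ⁻¹' Ω ∈ nhds (0:ℝ) := by
              refine (hΩo.preimage hcont).mem_nhds ?_
              simpa using hx₀Ω
            filter_upwards [this] with s hs using hs
          filter_upwards [hmemΩ] with s hs
          have hmem : ((t₀, x₀ + s • e) : ℝ × EuclideanSpace ℝ (Fin n))
              ∈ Set.Icc (0:ℝ) T ×ˢ K := ⟨Set.mem_Icc.2 ht₀, subset_closure hs⟩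
          have h1 := hmax' _ hmem
          have hgs : g s = φ (t₀, x₀ + s • e) := rfl
          have hgs0 : g 0 = φ (t₀, x₀) := by
            show (⟪zi 0, zi 0⟫ : ℝ) = ⟪Z (t₀, x₀), Z (t₀, x₀)⟫
            have : zi 0 = Z (t₀, x₀) := by
              show ξ t₀ (x₀ + (0:ℝ) • e) - ξ' t₀ (x₀ + (0:ℝ) • e) = _
              norm_num
              rfl
            rw [this]
          have h2 : φ (t₀, x₀ + s • e) - ε * t₀ ≤ φ (t₀, x₀) - ε * t₀ := h1
          rw [hgs, hgs0]
          linarith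
        have hc := second_deriv_nonpos_of_localMax hg1 hg2 hlocmax
        have hz00 : zi 0 = ζ₀ := by
          show ξ t₀ (x₀ + (0:ℝ) • e) - ξ' t₀ (x₀ + (0:ℝ) • e) = _
          norm_num
          rfl
        have hnn : (0:ℝ) ≤ ⟪du 0 - du' 0, du 0 - du' 0⟫ := real_inner_self_nonneg
        rw [hz00] at hc
        have hcomm := real_inner_comm DD ζ₀
        linarith
      -- sum over i : the Laplacian comparison
      have hsum : ⟪ζ₀, lap (ξ t₀) x₀ - lap (ξ' t₀) x₀⟫ ≤ 0 := by
        have hdist : lap (ξ t₀) x₀ - lap (ξ' t₀) x₀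
            = ∑ i : Fin n, (iteratedFDeriv ℝ 2 (ξ t₀) x₀ (fun _ => EuclideanSpace.single i 1)
              - iteratedFDeriv ℝ 2 (ξ' t₀) x₀ (fun _ => EuclideanSpace.single i 1)) := by
          rw [lap, lap, Finset.sum_sub_distrib]
        rw [hdist, inner_sum]
        exact Finset.sum_nonpos (fun i _ => hspace i)
      -- the PDE relation
      have e1 := heq t₀ ht₀pos x₀ hx₀Ω
      have e2 := heq' t₀ ht₀pos x₀ hx₀Ω
      set Sj : EuclideanSpace ℝ (Fin r) :=
        ∑ j : Fin r, (a j x₀ * Real.exp ⟪stdV j, ξ t₀ x₀⟫) • stdV j with hSj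
      set Sj' : EuclideanSpace ℝ (Fin r) :=
        ∑ j : Fin r, (a j x₀ * Real.exp ⟪stdV j, ξ' t₀ x₀⟫) • stdV j with hSj'
      have e3 : (dη - lap (ξ t₀) x₀) + Sj = (dη' - lap (ξ' t₀) x₀) + Sj' := by
        have e1' : (dη - lap (ξ t₀) x₀) + Sj = w x₀ := sub_eq_zero.1 e1
        have e2' : (dη' - lap (ξ' t₀) x₀) + Sj' = w x₀ := sub_eq_zero.1 e2
        rw [e1', e2']
      have e4 : dη - dη' = (lap (ξ t₀) x₀ - lap (ξ' t₀) x₀) - (Sj - Sj') := by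
        have : dη - dη' = (((dη - lap (ξ t₀) x₀) + Sj) - ((dη' - lap (ξ' t₀) x₀) + Sj'))
            + (lap (ξ t₀) x₀ - lap (ξ' t₀) x₀) - (Sj - Sj') := by abel
        rw [this, e3, sub_self, zero_add]
      -- the nonlinear term has the good sign
      have hSnonneg : 0 ≤ ⟪ζ₀, Sj - Sj'⟫ := by
        have hdiff : Sj - Sj' = ∑ j : Fin r,
            (a j x₀ * (Real.exp ⟪stdV j, ξ t₀ x₀⟫ - Real.exp ⟪stdV j, ξ' t₀ x₀⟫)) • stdV j := by
          rw [hSj, hSj', ← Finset.sum_sub_distrib]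
          congr 1
          ext j
          rw [← sub_smul, ← mul_sub]
        rw [hdiff, inner_sum]
        refine Finset.sum_nonneg (fun j _ => ?_)
        rw [real_inner_smul_right]
        have hinner : ⟪ζ₀, stdV j⟫ = ⟪stdV j, ξ t₀ x₀⟫ - ⟪stdV j, ξ' t₀ x₀⟫ := by
          rw [real_inner_comm, hζ₀, inner_sub_right]
        rw [hinner, mul_assoc]
        exact mul_nonneg (ha_nonneg j x₀ (subset_closure hx₀Ω)) (exp_monotone_aux _ _)
      -- contradiction
      have hfinal : ⟪ζ₀, dη - dη'⟫ ≤ 0 := by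
        rw [e4, inner_sub_right]
        linarith [hsum, hSnonneg]
      linarith
  -- conclude from the key claim
  intro t ht x hx
  rcases eq_or_lt_of_le ht with h0 | htpos
  · rw [← h0]; exact hinit x hx
  · have hb : ∀ ε > 0, φ (t, x) ≤ ε * t := fun ε hε =>
      key ε hε t htpos (t, x) ⟨⟨ht, le_refl t⟩, hx⟩
    have hφ0 : φ (t, x) ≤ 0 := by
      by_contra hpos
      push_neg at hpos
      have := hb (φ (t, x) / (2 * t)) (by positivity)
      rw [div_mul_eq_mul_div, mul_comm] at this
      have ht' : t ≠ 0 := ne_of_gt htpos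
      have h2 : t * φ (t, x) / (2 * t) = φ (t, x) / 2 := by
        field_simp
      rw [h2] at this
      linarith
    have : Z (t, x) = 0 := by
      have h1 := hφnonneg (t, x)
      have h2 : ⟪Z (t, x), Z (t, x)⟫ = 0 := le_antisymm hφ0 h1
      exact inner_self_eq_zero.1 h2
    exact sub_eq_zero.1 this
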